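/- DF-QuAD satisfies base score contestability: let T be an argumentation tree, let β be a node of T, and let T' be obtained from T by replacing the base score τ(β) of β with a strictly larger value τ'(β) ∈ [0,1], leaving all other base scores and the tree structure unchanged. Then if β is a pro node, σ(T') ≥ σ(T) (the DF-QuAD strength of the root does not decrease), and if β is a con node, σ(T') ≤ σ(T) (the strength of the root does not increase). -/

import Mathlib

/-- An argumentation tree: a base score, a list of attacking subtrees,
and a list of supporting subtrees. -/
inductive ATree : Type
  | node (τ : ℝ) (atts : List ATree) (sups : List ATree) : ATree

namespace ATree

/-- The DF-QuAD aggregation function `F`. -/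
def aggF (vs : List ℝ) : ℝ := 1 - (vs.map (fun v => 1 - v)).prod

/-- The DF-QuAD combination function `C`. -/
noncomputable def comb (v0 va vs : ℝ) : ℝ :=
  if va = vs then v0
  else if va > vs then v0 - v0 * (va - vs)
  else v0 + (1 - v0) * (vs - va)

/-- The DF-QuAD strength of an argumentation tree. -/
noncomputable def strength : ATree → ℝ
  | .node τ atts sups =>
      comb τ (aggF (atts.attach.map fun a => strength a.1))
             (aggF (sups.attach.map fun s => strength s.1))
  decreasing_by
  · simp_wf; have := List.sizeOf_lt_of_mem a.2; omega
  · simp_wf; have := List.sizeOf_lt_of_mem s.2; omega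

/-- The QEM influence function `h`. -/
noncomputable def hQEM (v : ℝ) : ℝ := (max v 0) ^ 2 / (1 + (max v 0) ^ 2)

/-- The QEM update function `s`. -/
noncomputable def updQEM (τ E : ℝ) : ℝ := τ + (1 - τ) * hQEM E - τ * hQEM (-E)

/-- The QEM strength of an argumentation tree. -/
noncomputable def qem : ATree → ℝ
  | .node τ atts sups =>
      updQEM τ ((sups.attach.map fun s => qem s.1).sum
                 - (atts.attach.map fun a => qem a.1).sum)
  decreasing_by
  · simp_wf; have := List.sizeOf_lt_of_mem s.2; omega
  · simp_wf; have := List.sizeOf_lt_of_mem a.2; omega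

/-- All base scores lie in `[0,1]`. -/
inductive Valid : ATree → Prop
  | node {τ : ℝ} {atts sups : List ATree} :
      0 ≤ τ → τ ≤ 1 → (∀ A ∈ atts, Valid A) → (∀ S ∈ sups, Valid S) →
      Valid (node τ atts sups)

/-- All base scores lie in the open interval `(0,1)`. -/
inductive ValidOpen : ATree → Prop
  | node {τ : ℝ} {atts sups : List ATree} :
      0 < τ → τ < 1 → (∀ A ∈ atts, ValidOpen A) → (∀ S ∈ sups, ValidOpen S) →
      ValidOpen (node τ atts sups)

/-- `At R pol T T'` holds iff `T'` is obtained from `T` by modifying it at a single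
node `β` of `T` according to the local modification relation `R`, where `pol` is the
polarity of the modified node: `pol = true` means `β` is a pro node (the path from
the root to `β` crosses an even number of attack edges), `pol = false` means `β` is
a con node (odd number of attack edges).  The local relation `R` gets the polarity
of the node it acts at relative to that node itself (used for modifications, such as
attaching a new child, for which the relevant polarity is that of the new child). -/
inductive At (R : Bool → ATree → ATree → Prop) : Bool → ATree → ATree → Prop
  | here {pol : Bool} {T T' : ATree} : R pol T T' → At R pol T T'
  | att {pol : Bool} {τ : ℝ} {a₁ a₂ sups : List ATree} {A A' : ATree} :
      At R pol A A' →
      At R (!pol) (node τ (a₁ ++ A :: a₂) sups) (node τ (a₁ ++ A' :: a₂) sups)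
  | sup {pol : Bool} {τ : ℝ} {atts s₁ s₂ : List ATree} {S S' : ATree} :
      At R pol S S' →
      At R pol (node τ atts (s₁ ++ S :: s₂)) (node τ atts (s₁ ++ S' :: s₂))

/-- Local modification replacing the base score `τ₁` of a node by `τ₂`
(the polarity of a node relative to itself is `true`, i.e. pro). -/
inductive BaseUpd (τ₁ τ₂ : ℝ) : Bool → ATree → ATree → Prop
  | intro {atts sups : List ATree} :
      BaseUpd τ₁ τ₂ true (node τ₁ atts sups) (node τ₂ atts sups)

/-- Local modification attaching a fresh leaf with base score `t` to a node, either
as an attacker (in which case the polarity of the new leaf relative to the node it is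
attached to is `false`) or as a supporter (polarity `true`). -/
inductive AttachLeaf (t : ℝ) : Bool → ATree → ATree → Prop
  | attacker {τ : ℝ} {a₁ a₂ sups : List ATree} :
      AttachLeaf t false (node τ (a₁ ++ a₂) sups)
                         (node τ (a₁ ++ node t [] [] :: a₂) sups)
  | supporter {τ : ℝ} {atts s₁ s₂ : List ATree} :
      AttachLeaf t true (node τ atts (s₁ ++ s₂))
                        (node τ atts (s₁ ++ node t [] [] :: s₂))

lemma strength_node (τ : ℝ) (atts sups : List ATree) :
    strength (node τ atts sups) = comb τ (aggF (atts.map strength)) (aggF (sups.map strength)) := by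
  rw [strength]; simp [List.attach_map_val]

lemma prod_bounds {l : List ℝ} (h : ∀ v ∈ l, 0 ≤ v ∧ v ≤ 1) :
    0 ≤ l.prod ∧ l.prod ≤ 1 := by
  induction l with
  | nil => simp
  | cons x xs ih =>
    have hx := h x (by simp)
    have ihs := ih fun v hv => h v (by simp [hv])
    simp only [List.prod_cons]
    constructor
    · exact mul_nonneg hx.1 ihs.1
    · nlinarith [hx.1, hx.2, ihs.1, ihs.2]

lemma aggF_bounds {l : List ℝ} (h : ∀ v ∈ l, 0 ≤ v ∧ v ≤ 1) :
    0 ≤ aggF l ∧ aggF l ≤ 1 := by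
  have := prod_bounds (l := l.map fun v => 1 - v) (by
    intro v hv; simp only [List.mem_map] at hv
    obtain ⟨w, hw, rfl⟩ := hv
    have := h w hw; constructor <;> linarith [this.1, this.2])
  unfold aggF; constructor <;> linarith [this.1, this.2]

lemma comb_bounds {v0 va vs : ℝ} (h0 : 0 ≤ v0) (h1 : v0 ≤ 1)
    (ha0 : 0 ≤ va) (ha1 : va ≤ 1) (hs0 : 0 ≤ vs) (hs1 : vs ≤ 1) :
    0 ≤ comb v0 va vs ∧ comb v0 va vs ≤ 1 := by
  unfold comb; split_ifs <;> constructor <;> nlinarith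

lemma comb_mono_v0 {v0 v0' va vs : ℝ} (h : v0 ≤ v0')
    (ha0 : 0 ≤ va) (ha1 : va ≤ 1) (hs0 : 0 ≤ vs) (hs1 : vs ≤ 1) :
    comb v0 va vs ≤ comb v0' va vs := by
  unfold comb; split_ifs <;> nlinarith

lemma comb_anti_va {v0 va va' vs : ℝ} (h : va ≤ va') (h0 : 0 ≤ v0) (h1 : v0 ≤ 1) :
    comb v0 va' vs ≤ comb v0 va vs := by
  unfold comb; split_ifs <;> nlinarith

lemma comb_mono_vs {v0 va vs vs' : ℝ} (h : vs ≤ vs') (h0 : 0 ≤ v0) (h1 : v0 ≤ 1) :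
    comb v0 va vs ≤ comb v0 va vs' := by
  unfold comb; split_ifs <;> nlinarith

lemma aggF_mono {l₁ l₂ : List ℝ} {x y : ℝ} (hxy : x ≤ y)
    (h : ∀ v ∈ l₁ ++ l₂, v ≤ 1) :
    aggF (l₁ ++ x :: l₂) ≤ aggF (l₁ ++ y :: l₂) := by
  have h1 : (0:ℝ) ≤ (l₁.map fun v => 1 - v).prod :=
    List.prod_nonneg (by intro a ha; simp only [List.mem_map] at ha
                         obtain ⟨w, hw, rfl⟩ := ha; linarith [h w (by simp [hw])])
  have h2 : (0:ℝ) ≤ (l₂.map fun v => 1 - v).prod :=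
    List.prod_nonneg (by intro a ha; simp only [List.mem_map] at ha
                         obtain ⟨w, hw, rfl⟩ := ha; linarith [h w (by simp [hw])])
  unfold aggF
  simp only [List.map_append, List.prod_append, List.map_cons, List.prod_cons]
  nlinarith [mul_nonneg (mul_nonneg h1 h2) (sub_nonneg.2 hxy)]

lemma strength_bounds {T : ATree} (hT : T.Valid) : 0 ≤ T.strength ∧ T.strength ≤ 1 := by
  induction hT with
  | @node τ atts sups h0 h1 ha hs iha ihs =>
    rw [strength_node]
    have hA := aggF_bounds (l := atts.map strength) (by
      intro v hv; simp only [List.mem_map] at hv; obtain ⟨w, hw, rfl⟩ := hv; exact iha w hw)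
    have hS := aggF_bounds (l := sups.map strength) (by
      intro v hv; simp only [List.mem_map] at hv; obtain ⟨w, hw, rfl⟩ := hv; exact ihs w hw)
    exact comb_bounds h0 h1 hA.1 hA.2 hS.1 hS.2

lemma valid_preserved {τ₁ τ₂ : ℝ} (h0 : 0 ≤ τ₂) (h1 : τ₂ ≤ 1) {pol : Bool} {T T' : ATree}
    (hAt : At (BaseUpd τ₁ τ₂) pol T T') (hT : T.Valid) : T'.Valid := by
  induction hAt with
  | here hR =>
    cases hR with
    | intro => cases hT with | node _ _ ha hs => exact .node h0 h1 ha hs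
  | @att pol τ a₁ a₂ sups A A' hA ih =>
    cases hT with
    | node ht0 ht1 ha hs =>
      refine .node ht0 ht1 ?_ hs
      intro X hX
      rcases List.mem_append.1 hX with hX | hX
      · exact ha X (by simp [hX])
      · rcases List.mem_cons.1 hX with rfl | hX
        · exact ih (ha A (by simp))
        · exact ha X (by simp [hX])
  | @sup pol τ atts s₁ s₂ S S' hS ih =>
    cases hT with
    | node ht0 ht1 ha hs =>
      refine .node ht0 ht1 ha ?_
      intro X hX
      rcases List.mem_append.1 hX with hX | hX
      · exact hs X (by simp [hX])
      · rcases List.mem_cons.1 hX with rfl | hX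
        · exact ih (hs S (by simp))
        · exact hs X (by simp [hX])

lemma main_aux {τ₁ τ₂ : ℝ} (hlt : τ₁ < τ₂) (h0 : 0 ≤ τ₂) (h1 : τ₂ ≤ 1)
    {pol : Bool} {T T' : ATree}
    (hAt : At (BaseUpd τ₁ τ₂) pol T T') (hT : T.Valid) :
    (pol = true → T.strength ≤ T'.strength) ∧
    (pol = false → T'.strength ≤ T.strength) := by
  induction hAt with
  | here hR =>
    cases hR with
    | @intro atts sups =>
      cases hT with
      | node ht0 ht1 ha hs =>
        refine ⟨fun _ => ?_, fun h => by simp at h⟩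
        rw [strength_node, strength_node]
        have hA := aggF_bounds (l := atts.map strength) (by
          intro v hv; simp only [List.mem_map] at hv
          obtain ⟨w, hw, rfl⟩ := hv; exact strength_bounds (ha w hw))
        have hS := aggF_bounds (l := sups.map strength) (by
          intro v hv; simp only [List.mem_map] at hv
          obtain ⟨w, hw, rfl⟩ := hv; exact strength_bounds (hs w hw))
        exact comb_mono_v0 hlt.le hA.1 hA.2 hS.1 hS.2
  | @att pol τ a₁ a₂ sups A A' hA ih =>
    cases hT with
    | node ht0 ht1 ha hs =>
      have hVA : A.Valid := ha A (by simp)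
      have ihA := ih hVA
      have hb : ∀ v ∈ (a₁.map strength) ++ (a₂.map strength), v ≤ 1 := by
        intro v hv
        rcases List.mem_append.1 hv with hv | hv <;>
          · simp only [List.mem_map] at hv
            obtain ⟨w, hw, rfl⟩ := hv
            exact (strength_bounds (ha w (by simp [hw]))).2
      rw [strength_node, strength_node]
      simp only [List.map_append, List.map_cons]
      cases pol with
      | true =>
        exact ⟨fun h => by simp at h,
          fun _ => comb_anti_va (aggF_mono (ihA.1 rfl) hb) ht0 ht1⟩
      | false =>
        exact ⟨fun _ => comb_anti_va (aggF_mono (ihA.2 rfl) hb) ht0 ht1,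
          fun h => by simp at h⟩
  | @sup pol τ atts s₁ s₂ S S' hS ih =>
    cases hT with
    | node ht0 ht1 ha hs =>
      have hVS : S.Valid := hs S (by simp)
      have ihS := ih hVS
      have hb : ∀ v ∈ (s₁.map strength) ++ (s₂.map strength), v ≤ 1 := by
        intro v hv
        rcases List.mem_append.1 hv with hv | hv <;>
          · simp only [List.mem_map] at hv
            obtain ⟨w, hw, rfl⟩ := hv
            exact (strength_bounds (hs w (by simp [hw]))).2
      rw [strength_node, strength_node]
      simp only [List.map_append, List.map_cons]
      cases pol with
      | true =>
        exact ⟨fun _ => comb_mono_vs (aggF_mono (ihS.1 rfl) hb) ht0 ht1,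
          fun h => by simp at h⟩
      | false =>
        exact ⟨fun h => by simp at h,
          fun _ => comb_mono_vs (aggF_mono (ihS.2 rfl) hb) ht0 ht1⟩

end ATree

open ATree in
/-- DF-QuAD satisfies base score contestability: if `T'` is obtained from `T` by
replacing the base score `τ₁` of a node `β` of `T` with a strictly larger value
`τ₂ ∈ [0,1]`, leaving everything else unchanged, then σ(T') ≥ σ(T) if `β` is a pro
node, and σ(T') ≤ σ(T) if `β` is a con node. -/
theorem dfquad_base_score_contestability
    {T T' : ATree} {τ₁ τ₂ : ℝ} {pol : Bool}
    (hT : T.Valid) (hlt : τ₁ < τ₂) (h0 : 0 ≤ τ₂) (h1 : τ₂ ≤ 1)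
    (hAt : At (BaseUpd τ₁ τ₂) pol T T') :
    (pol = true → T.strength ≤ T'.strength) ∧
    (pol = false → T'.strength ≤ T.strength) := by
  exact ATree.main_aux hlt h0 h1 hAt hT
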